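/- Let Ω = {ω₁,…,ωₙ} be a finite set, P a measure with weights p₁ ≥ p₂ ≥ … ≥ pₙ > 0, and Q a measure with weights 0 < q₁ ≤ q₂ ≤ … ≤ qₙ. Fix γ ≥ 0 and suppose k is such that q₁+…+q_k ≤ γ and q₁+…+q_{k+1} > γ (or k = n if Q(Ω) ≤ γ). Let à = {ω₁,…,ω_k}. Then for every subset A ⊆ Ω with Q(A) ≤ γ one has P(Ã) ≥ P(A). -/
import Mathlib

lemma fin_le_strictMono {m n : ℕ} (g : Fin m → Fin n) (hg : StrictMono g)
    (j : Fin m) : (j : ℕ) ≤ (g j : ℕ) := by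
  obtain ⟨r, hr⟩ := j
  induction r with
  | zero => simp
  | succ r ih =>
    have h1 : (⟨r, by omega⟩ : Fin m) < ⟨r + 1, hr⟩ := by simp [Fin.lt_def]
    have h2 := hg h1
    have := ih (by omega)
    simp only [Fin.lt_def, Fin.val_mk] at h2 this ⊢
    omega

lemma sum_eq_orderIso {n m : ℕ} (A : Finset (Fin n)) (hA : A.card = m)
    (f : Fin n → ℝ) :
    ∑ i ∈ A, f i = ∑ j : Fin m, f (A.orderEmbOfFin hA j) := by
  rw [← Finset.sum_attach A f]
  exact Fintype.sum_equiv (A.orderIsoOfFin hA).toEquiv.symm _ _ (by simp [Finset.orderEmbOfFin])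

lemma filter_lt_eq_map {n m : ℕ} (hm : m ≤ n) :
    Finset.univ.filter (fun i : Fin n => (i : ℕ) < m)
      = Finset.univ.map (Fin.castLEEmb hm) := by
  ext i
  simp only [Finset.mem_filter, Finset.mem_univ, true_and, Finset.mem_map,
    Fin.castLEEmb, Function.Embedding.coeFn_mk]
  constructor
  · intro h; exact ⟨⟨i, h⟩, by simp [Fin.castLE]⟩
  · rintro ⟨j, rfl⟩; exact j.2

theorem greedy_optimal_finite
    (n : ℕ) (p q : Fin n → ℝ)
    (hp_anti : Antitone p) (hp_pos : ∀ i, 0 < p i)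
    (hq_mono : Monotone q) (hq_pos : ∀ i, 0 < q i)
    (γ : ℝ) (hγ : 0 ≤ γ) (k : ℕ) (hk : k ≤ n)
    (h1 : ∑ i ∈ Finset.univ.filter (fun i : Fin n => (i : ℕ) < k), q i ≤ γ)
    (h2 : k < n → γ < ∑ i ∈ Finset.univ.filter (fun i : Fin n => (i : ℕ) < k + 1), q i)
    (A : Finset (Fin n)) (hA : ∑ i ∈ A, q i ≤ γ) :
    ∑ i ∈ A, p i ≤ ∑ i ∈ Finset.univ.filter (fun i : Fin n => (i : ℕ) < k), p i := by
  set m := A.card with hm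
  have hmn : m ≤ n := hm ▸ (Finset.card_le_card (Finset.subset_univ A)).trans_eq (by simp)
  have key : ∀ j : Fin m, (j : ℕ) ≤ (A.orderEmbOfFin rfl j : ℕ) :=
    fun j => fin_le_strictMono _ (A.orderEmbOfFin rfl).strictMono j
  -- lower bound on q-sum: ∑_{i<m} q ≤ ∑_A q
  have hqlow : ∑ i ∈ Finset.univ.filter (fun i : Fin n => (i : ℕ) < m), q i ≤ ∑ i ∈ A, q i := by
    rw [sum_eq_orderIso A rfl q, filter_lt_eq_map hmn, Finset.sum_map]
    apply Finset.sum_le_sum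
    intro j _
    exact hq_mono (by simpa [Fin.le_def] using key j)
  -- m ≤ k
  have hmk : m ≤ k := by
    by_contra h
    push_neg at h
    have hkn : k < n := lt_of_lt_of_le h hmn
    have hsub : Finset.univ.filter (fun i : Fin n => (i : ℕ) < k + 1)
        ⊆ Finset.univ.filter (fun i : Fin n => (i : ℕ) < m) := by
      intro i hi
      simp only [Finset.mem_filter, Finset.mem_univ, true_and] at hi ⊢
      omega
    have := Finset.sum_le_sum_of_subset_of_nonneg hsub (fun i _ _ => (hq_pos i).le)
    have := h2 hkn
    linarith
  -- upper bound on p-sum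
  have hpup : ∑ i ∈ A, p i ≤ ∑ i ∈ Finset.univ.filter (fun i : Fin n => (i : ℕ) < m), p i := by
    rw [sum_eq_orderIso A rfl p, filter_lt_eq_map hmn, Finset.sum_map]
    apply Finset.sum_le_sum
    intro j _
    exact hp_anti (by simpa [Fin.le_def] using key j)
  refine hpup.trans (Finset.sum_le_sum_of_subset_of_nonneg ?_ (fun i _ _ => (hp_pos i).le))
  intro i hi
  simp only [Finset.mem_filter, Finset.mem_univ, true_and] at hi ⊢
  omega
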